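/- Fix an integer n ≥ 1 and define a : ℕ → ℕ by a 0 = 1, a 1 = 1, and for k ≥ 2, a k = n·a(k−1) + (n−1)·∑_{i=2}^{k−1} a(i)·a(k−i). Then the sequence of real ratios r k = a(k+1)/a(k) (k ≥ 1) is nondecreasing and converges to 2n − 1 + 2·√(n² − n). -/

import Mathlib

set_option maxHeartbeats 1000000

open PowerSeries Finset Filter

lemma aux_prec (n : ℕ) (hn : 1 ≤ n) (a : ℕ → ℕ) (h0 : a 0 = 1) (h1 : a 1 = 1)
    (hrec : ∀ k, 2 ≤ k →
      a k = n * a (k - 1) + (n - 1) * ∑ i ∈ Finset.Icc 2 (k - 1), a i * a (k - i)) :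
    ∀ j : ℕ, ((j : ℤ) + 3) * a (j + 3)
      = (2 * (n : ℤ) - 1) * (2 * (j : ℤ) + 3) * a (j + 2) - (j : ℤ) * a (j + 1) := by
  set B : PowerSeries ℤ := PowerSeries.mk fun k => if k = 0 then 0 else (a k : ℤ) with hB
  have hB0 : (coeff 0) B = 0 := by simp [hB]
  have hBk : ∀ k : ℕ, k ≠ 0 → (coeff k) B = (a k : ℤ) := by
    intro k hk; simp [hB, hk]
  set m : ℤ := (n : ℤ) - 1 with hm
  have hQ : C m * (B * B) + (X - 1) * B + X = 0 := by
    ext k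
    simp only [map_add, map_sub, coeff_C_mul, map_zero, sub_mul, one_mul, map_sub]
    match k with
    | 0 => simp [hB0, coeff_mul]
    | 1 =>
        simp [coeff_mul, Finset.Nat.sum_antidiagonal_eq_sum_range_succ_mk, Finset.sum_range_succ,
          hB0, hBk 1 one_ne_zero, h1]
    | (j+2) =>
        have hcm : (coeff (j+2)) (B * B) = ∑ i ∈ Finset.range (j + 3),
            (coeff i) B * (coeff (j + 2 - i)) B := by
          rw [coeff_mul, Finset.Nat.sum_antidiagonal_eq_sum_range_succ_mk]
        have hsub : Finset.Icc 1 (j+1) ⊆ Finset.range (j+3) := by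
          intro i hi; simp only [Finset.mem_Icc] at hi; simp [Finset.mem_range]; omega
        have hsum : ∑ i ∈ Finset.range (j + 3), (coeff i) B * (coeff (j + 2 - i)) B
            = ∑ i ∈ Finset.Icc 1 (j+1), (coeff i) B * (coeff (j + 2 - i)) B := by
          refine (Finset.sum_subset hsub ?_).symm
          intro i hi hni
          simp only [Finset.mem_range] at hi
          simp only [Finset.mem_Icc, not_and, not_le] at hni
          rcases Nat.eq_zero_or_pos i with h | h
          · subst h; rw [hB0, zero_mul]
          · have : i = j + 2 := by omega
            subst this
            rw [show j + 2 - (j+2) = 0 by omega, hB0, mul_zero]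
        have hsum2 : ∑ i ∈ Finset.Icc 1 (j+1), (coeff i) B * (coeff (j + 2 - i)) B
            = ∑ i ∈ Finset.Icc 1 (j+1), (a i : ℤ) * (a (j + 2 - i) : ℤ) := by
          refine Finset.sum_congr rfl ?_
          intro i hi
          simp only [Finset.mem_Icc] at hi
          rw [hBk i (by omega), hBk (j+2-i) (by omega)]
        have hsplit : ∑ i ∈ Finset.Icc 1 (j+1), (a i : ℤ) * (a (j + 2 - i) : ℤ)
            = (a (j+1) : ℤ) + ∑ i ∈ Finset.Icc 2 (j+1), (a i : ℤ) * (a (j + 2 - i) : ℤ) := by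
          rw [Finset.Icc_eq_cons_Ioc (by omega), Finset.sum_cons, ← Finset.Icc_add_one_left_eq_Ioc]
          norm_num [h1]
        have hs := hrec (j+2) (by omega)
        simp only [show j+2-1 = j+1 from rfl] at hs
        have hsZ : (a (j+2) : ℤ) = (n:ℤ) * a (j+1)
            + ((n:ℤ)-1) * ∑ i ∈ Finset.Icc 2 (j+1), (a i : ℤ) * (a (j+2-i) : ℤ) := by
          rw [hs]
          push_cast [Nat.cast_sub hn]
          ring
        rw [hcm, hsum, hsum2, hsplit]
        rw [coeff_X]
        simp only [if_neg (by omega : ¬ j+2 = 1)]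
        have hXB : (coeff (j+2)) (X * B) = (coeff (j+1)) B := coeff_succ_X_mul (j+1) B
        rw [hXB, hBk (j+1) (by omega), hBk (j+2) (by omega)]
        rw [hm]
        linarith [hsZ]
  set B' : PowerSeries ℤ := (d⁄dX ℤ) B with hB'
  have hDQ : C m * (B * B' + B * B') + ((X - 1) * B' + B * 1) + 1 = 0 := by
    have := congrArg (⇑(d⁄dX ℤ)) hQ
    simp only [map_add, Derivation.leibniz, derivative_X, derivative_C, map_zero, map_sub,
      map_one, smul_eq_mul, sub_zero, mul_one, mul_zero, zero_add, add_zero, zero_mul,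
      smul_zero, zero_sub, Derivation.map_one_eq_zero] at this
    rw [← hB'] at this
    linear_combination this
  have hstar : X * (X * B') + B' + C (2*(n:ℤ)-1) * B
      = C (4*(n:ℤ)-2) * (X * B') + 1 + X + X * B := by
    have e1 : (C (4*(n:ℤ)-2)) = 4 * C m + 2 := by
      rw [show (4*(n:ℤ)-2) = 4*((n:ℤ)-1)+2 by ring, map_add, map_mul, ← hm]
      norm_num
    have e2 : (C (2*(n:ℤ)-1)) = 2 * C m + 1 := by
      rw [show (2*(n:ℤ)-1) = 2*((n:ℤ)-1)+1 by ring, map_add, map_mul, ← hm]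
      norm_num
    rw [e1, e2]
    linear_combination (2 * C m * B + X - 1) * hDQ - (4 * C m * B' + 2) * hQ
  intro j
  have hco := congrArg (⇑(PowerSeries.coeff (j+2))) hstar
  simp only [map_add, coeff_C_mul, coeff_succ_X_mul, coeff_one, coeff_X,
    if_neg (by omega : ¬ j+2 = 1), if_neg (by omega : ¬ j+2 = 0)] at hco
  simp only [hB', coeff_derivative] at hco
  rw [hBk (j+1) (by omega), hBk (j+2) (by omega), hBk (j+3) (by omega)] at hco
  push_cast at hco ⊢
  linarith [hco]

/-- STATEMENT 6: For the recursively defined sequence `a` counting objects of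
`M_n(k)/Σ_k`, the ratios `a (k+1) / a k` (for `k ≥ 1`) are nondecreasing and
converge to `2n − 1 + 2√(n² − n)`. -/
theorem ratios_increase_to_limit (n : ℕ) (hn : 1 ≤ n) (a : ℕ → ℕ)
    (h0 : a 0 = 1) (h1 : a 1 = 1)
    (hrec : ∀ k, 2 ≤ k →
      a k = n * a (k - 1) + (n - 1) * ∑ i ∈ Finset.Icc 2 (k - 1), a i * a (k - i)) :
    (∀ k, 1 ≤ k → (a (k + 1) : ℝ) / a k ≤ (a (k + 2) : ℝ) / a (k + 1)) ∧
    Filter.Tendsto (fun k => (a (k + 1) : ℝ) / a k) Filter.atTop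
      (nhds (2 * n - 1 + 2 * Real.sqrt ((n : ℝ) ^ 2 - n))) := by
  -- basic positivity
  have hpos : ∀ k, 1 ≤ a k := by
    intro k
    induction k using Nat.strong_induction_on with
    | _ k ih =>
      match k with
      | 0 => omega
      | 1 => omega
      | (j+2) =>
        have h := hrec (j+2) (by omega)
        have := ih (j+1) (by omega)
        have h2 : 0 < n * a (j + 1) := Nat.mul_pos (by omega) (by omega)
        simp only [show j+2-1 = j+1 from rfl] at h
        omega
  rcases Nat.lt_or_ge n 2 with hn1 | hn2
  · -- n = 1
    have hne : n = 1 := by omega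
    subst hne
    have hone : ∀ k, a k = 1 := by
      intro k
      induction k using Nat.strong_induction_on with
      | _ k ih =>
        match k with
        | 0 => exact h0
        | 1 => exact h1
        | (j+2) =>
          have h := hrec (j+2) (by omega)
          simpa [ih (j+1) (by omega)] using h
    have hfun : (fun k => (a (k + 1) : ℝ) / a k) = fun _ => 1 := by
      funext k; simp [hone]
    constructor
    · intro k hk; simp [hone]
    · rw [hfun]
      have : ((1:ℕ) : ℝ) ^ 2 - ((1:ℕ):ℝ) = 0 := by norm_num
      rw [this, Real.sqrt_zero]
      norm_num
  · -- n ≥ 2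
    have hapos : ∀ k, (0:ℝ) < a k := by
      intro k; exact_mod_cast Nat.lt_of_lt_of_le Nat.zero_lt_one (hpos k)
    have hnR : (2:ℝ) ≤ (n:ℝ) := by exact_mod_cast hn2
    set s : ℝ := Real.sqrt ((n:ℝ)^2 - n) with hs
    have hs2 : s^2 = (n:ℝ)^2 - n := Real.sq_sqrt (by nlinarith)
    have hs0 : (0:ℝ) ≤ s := Real.sqrt_nonneg _
    set q : ℝ := 2*(n:ℝ) - 1 with hqdef
    set L : ℝ := q + 2*s with hLdef
    have hqL : L^2 + 1 = 2*q*L := by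
      rw [hLdef]; nlinarith [hs2]
    have hL3 : (3:ℝ) ≤ L := by rw [hLdef, hqdef]; nlinarith [hs0]
    have hL0 : (0:ℝ) < L := by linarith
    have h2q : L < 2*q := by nlinarith [hqL, hL0]
    have h8q : 8*q ≤ 5*L := by nlinarith [hqL, hL3, hL0]
    clear_value s q L
    -- the real three-term recurrence
    have keyR : ∀ j : ℕ, ((j:ℝ)+3) * a (j+3)
        = q*(2*(j:ℝ)+3)*a (j+2) - (j:ℝ)*a (j+1) := by
      intro j
      have := aux_prec n hn a h0 h1 hrec j
      rw [hqdef]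
      exact_mod_cast this
    -- values of a 2 and a 3
    have ha2 : a 2 = n := by
      have h := hrec 2 (by omega)
      rw [show (2:ℕ)-1 = 1 from rfl, Finset.Icc_eq_empty (by omega)] at h
      simpa [h1] using h
    have ha3R : (a 3 : ℝ) = n * q := by
      have h := hrec 3 (by omega)
      rw [show (3:ℕ)-1 = 2 from rfl, Finset.Icc_self, Finset.sum_singleton] at h
      rw [show (3:ℕ)-2 = 1 from rfl, h1, ha2] at h
      rw [h, hqdef]
      push_cast [Nat.cast_sub hn]
      ring
    have ha2R : (a 2 : ℝ) = n := by exact_mod_cast ha2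
    -- the sandwich, in cleared (denominator-free) form
    have sw : ∀ j : ℕ, 1 ≤ j →
        L*(2*(j:ℝ)+1) * a (j+1) ≤ (2*(j:ℝ)+4) * a (j+2) ∧
        (2*(j:ℝ)+6) * (a (j+2):ℝ) ≤ L*(2*(j:ℝ)+3) * a (j+1) := by
      intro j hj
      induction j, hj using Nat.le_induction with
      | base =>
        push_cast
        rw [ha2R, ha3R]
        constructor
        · nlinarith [h2q, hnR]
        · nlinarith [h8q, hnR]
      | succ j hj IH =>
        obtain ⟨IH1, IH2⟩ := IH
        have hjR : (1:ℝ) ≤ (j:ℝ) := by exact_mod_cast hj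
        have key := keyR j
        set A1 := (a (j+1) : ℝ)
        set A2 := (a (j+2) : ℝ)
        set A3 := (a (j+3) : ℝ)
        have hA2 : (0:ℝ) < A2 := hapos _
        have hA1 : (0:ℝ) < A1 := hapos _
        push_cast
        constructor
        · -- lower: L(2j+3) A2 ≤ (2j+6) A3
          have keyE : L*(2*(j:ℝ)+1)*((2*(j:ℝ)+6)*A3)
              = (L^2+1)*(2*(j:ℝ)+1)*(2*(j:ℝ)+3)*A2 - 2*(j:ℝ)*(L*(2*(j:ℝ)+1)*A1) := by
            linear_combination (2*L*(2*(j:ℝ)+1))*key - ((2*(j:ℝ)+1)*(2*(j:ℝ)+3)*A2)*hqL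
          have h1' : 2*(j:ℝ)*(L*(2*(j:ℝ)+1)*A1) ≤ 2*(j:ℝ)*((2*(j:ℝ)+4)*A2) :=
            mul_le_mul_of_nonneg_left IH1 (by positivity)
          have target2 : L*(2*(j:ℝ)+1)*(L*(2*(j:ℝ)+3)*A2) ≤ L*(2*(j:ℝ)+1)*((2*(j:ℝ)+6)*A3) := by
            nlinarith [keyE, h1', hA2]
          have := le_of_mul_le_mul_left
            (by convert target2 using 1 <;> ring) (show (0:ℝ) < L*(2*(j:ℝ)+1) by positivity)
          linarith [this]
        · -- upper: (2j+8) A3 ≤ L(2j+5) A2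
          have keyE2 : 2*L*(2*(j:ℝ)+3)*((2*(j:ℝ)+8)*A3)*((j:ℝ)+3)
              = (L^2+1)*(2*(j:ℝ)+3)^2*(2*(j:ℝ)+8)*A2 - 2*(j:ℝ)*(2*(j:ℝ)+8)*(L*(2*(j:ℝ)+3)*A1) := by
            linear_combination (2*L*(2*(j:ℝ)+3)*(2*(j:ℝ)+8))*key - ((2*(j:ℝ)+3)^2*(2*(j:ℝ)+8)*A2)*hqL
          have h2' : 2*(j:ℝ)*(2*(j:ℝ)+8)*((2*(j:ℝ)+6)*A2) ≤ 2*(j:ℝ)*(2*(j:ℝ)+8)*(L*(2*(j:ℝ)+3)*A1) :=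
            mul_le_mul_of_nonneg_left IH2 (by positivity)
          have hLL : (9:ℝ) ≤ L^2 := by nlinarith [hL3]
          have t1 : (0:ℝ) ≤ (L^2 - 9) * A2 := mul_nonneg (by linarith) hA2.le
          have target3 : 2*L*(2*(j:ℝ)+3)*((2*(j:ℝ)+8)*A3)*((j:ℝ)+3)
              ≤ 2*L*(2*(j:ℝ)+3)*(L*(2*(j:ℝ)+5)*A2)*((j:ℝ)+3) := by
            nlinarith [keyE2, h2', t1, mul_nonneg (by linarith : (0:ℝ) ≤ (j:ℝ)) t1,
              mul_nonneg (by linarith : (0:ℝ) ≤ (j:ℝ)) hA2.le, hA2.le]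
          have hpos2 : (0:ℝ) < 2*L*(2*(j:ℝ)+3)*((j:ℝ)+3) := by positivity
          nlinarith [target3, hpos2, mul_pos (mul_pos (mul_pos (by linarith : (0:ℝ) < 2*L) (by linarith : (0:ℝ) < 2*(j:ℝ)+3)) (by linarith : (0:ℝ) < (j:ℝ)+3)) hA2]
    constructor
    · -- monotonicity
      intro k hk
      rw [div_le_div_iff₀ (hapos k) (hapos (k+1))]
      match k, hk with
      | 1, _ =>
        rw [h1, ha2R, ha3R, hqdef]
        push_cast
        nlinarith [hnR]
      | (j+2), _ =>
        have hu := (sw (j+1) (by omega)).2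
        have hl := (sw (j+2) (by omega)).1
        push_cast at hu hl
        have e1 := mul_le_mul_of_nonneg_right hu (hapos (j+3)).le
        have e2 := mul_le_mul_of_nonneg_right hl (hapos (j+2)).le
        have hj0 : (0:ℝ) ≤ (j:ℝ) := Nat.cast_nonneg j
        nlinarith [e1, e2, hapos (j+2), hapos (j+3)]
    · -- convergence
      have haux : ∀ c : ℝ, Tendsto (fun k : ℕ => (2*(k:ℝ)+c)) atTop atTop := fun c =>
        tendsto_atTop_add_const_right _ c (tendsto_natCast_atTop_atTop.const_mul_atTop two_pos)
      have hflo : Tendsto (fun k : ℕ => L*(2*(k:ℝ)-1)/(2*(k:ℝ)+2)) atTop (nhds L) := by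
        have h3 : Tendsto (fun k : ℕ => (3:ℝ)/(2*(k:ℝ)+2)) atTop (nhds 0) :=
          tendsto_const_nhds.div_atTop (haux 2)
        have h4 := (((tendsto_const_nhds : Tendsto (fun _ : ℕ => (1:ℝ)) atTop (nhds 1))).sub h3).const_mul L
        simp only [sub_zero, mul_one] at h4
        refine h4.congr fun k => ?_
        have : (2*(k:ℝ)+2) ≠ 0 := by positivity
        rw [show L * (1 - 3/(2*(k:ℝ)+2)) = (L*(2*(k:ℝ)+2) - L*3)/(2*(k:ℝ)+2) by
          rw [sub_div, mul_div_assoc, mul_div_assoc, div_self this]; ring]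
        rw [div_eq_div_iff this this]
        ring
      have hfhi : Tendsto (fun k : ℕ => L*(2*(k:ℝ)+1)/(2*(k:ℝ)+4)) atTop (nhds L) := by
        have h3 : Tendsto (fun k : ℕ => (3:ℝ)/(2*(k:ℝ)+4)) atTop (nhds 0) :=
          tendsto_const_nhds.div_atTop (haux 4)
        have h4 := (((tendsto_const_nhds : Tendsto (fun _ : ℕ => (1:ℝ)) atTop (nhds 1))).sub h3).const_mul L
        simp only [sub_zero, mul_one] at h4
        refine h4.congr fun k => ?_
        have : (2*(k:ℝ)+4) ≠ 0 := by positivity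
        rw [show L * (1 - 3/(2*(k:ℝ)+4)) = (L*(2*(k:ℝ)+4) - L*3)/(2*(k:ℝ)+4) by
          rw [sub_div, mul_div_assoc, mul_div_assoc, div_self this]; ring]
        rw [div_eq_div_iff this this]
        ring
      refine tendsto_of_tendsto_of_tendsto_of_le_of_le' hflo hfhi ?_ ?_
      · filter_upwards [eventually_ge_atTop 2] with k hk
        obtain ⟨j, rfl⟩ : ∃ j, k = j + 2 := ⟨k - 2, by omega⟩
        have hl := (sw (j+1) (by omega)).1
        push_cast at hl ⊢
        rw [div_le_div_iff₀ (by positivity) (hapos (j+2))]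
        nlinarith [hl]
      · filter_upwards [eventually_ge_atTop 2] with k hk
        obtain ⟨j, rfl⟩ : ∃ j, k = j + 2 := ⟨k - 2, by omega⟩
        have hu := (sw (j+1) (by omega)).2
        push_cast at hu ⊢
        rw [div_le_div_iff₀ (hapos (j+2)) (by positivity)]
        nlinarith [hu]
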